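/- Let X ⊂ ℝ^N be a bounded closed measurable set with positive Lebesgue measure, M a finite index set, and φ_m : X → ℝ bounded measurable functions for m ∈ M. For θ ∈ ℝ^M define Z_θ = ∫_X exp(−Σ_m θ_m φ_m(x)) dx, the Gibbs density π_θ(x) = exp(−Σ_m θ_m φ_m(x)) / Z_θ on X, and η_m(θ) = ∫_X φ_m(x) π_θ(x) dx. Then for every μ ∈ ℝ^M and every choice of Λ_m > 0 (m ∈ M), there exists θ ∈ ℝ^M such that θ_m = Λ_m(η_m(θ) − μ_m) for every m ∈ M. -/

import Mathlib

open MeasureTheory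

theorem exists_fixed_point_gibbs_continuous
    (N : ℕ) (X : Set (Fin N → ℝ))
    (hXbdd : Bornology.IsBounded X) (hXclosed : IsClosed X)
    (hXmeas : MeasurableSet X) (hXpos : 0 < volume X)
    (M : Type*) [Fintype M]
    (φ : M → (Fin N → ℝ) → ℝ)
    (hφmeas : ∀ m, Measurable (φ m))
    (hφbdd : ∀ m, ∃ C : ℝ, ∀ x ∈ X, |φ m x| ≤ C)
    (Λ : M → ℝ) (hΛ : ∀ m, 0 < Λ m) (μ : M → ℝ) :
    ∃ θ : M → ℝ, ∀ m, θ m =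
      Λ m * ((∫ x in X, φ m x *
                (Real.exp (-∑ m' : M, θ m' * φ m' x) /
                  ∫ y in X, Real.exp (-∑ m' : M, θ m' * φ m' y))) - μ m) := by
  classical
  rcases isEmpty_or_nonempty M with hM | hM
  · exact ⟨fun _ => 0, fun m => (hM.elim m)⟩
  choose C hC using hφbdd
  obtain ⟨x₀, hx₀⟩ := nonempty_of_measure_ne_zero hXpos.ne'
  have hC0 : ∀ m, 0 ≤ C m := fun m => (abs_nonneg _).trans (hC m x₀ hx₀)
  have hXfin : volume X < ⊤ := hXbdd.measure_lt_top
  set ν := volume.restrict X with hν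
  haveI : IsFiniteMeasure ν := ⟨by rw [hν, Measure.restrict_apply_univ]; exact hXfin⟩
  have hae : ∀ᵐ x ∂ν, x ∈ X := ae_restrict_mem hXmeas
  set S : (M → ℝ) → (Fin N → ℝ) → ℝ := fun θ x => ∑ m, θ m * φ m x with hSdef
  set B : (M → ℝ) → ℝ := fun θ => ∑ m, |θ m| * C m with hBdef
  have hSB : ∀ θ, ∀ x ∈ X, |S θ x| ≤ B θ := by
    intro θ x hx
    calc |S θ x| ≤ ∑ m, |θ m * φ m x| := Finset.abs_sum_le_sum_abs _ _
      _ ≤ ∑ m, |θ m| * C m := Finset.sum_le_sum fun m _ => by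
          rw [abs_mul]; exact mul_le_mul_of_nonneg_left (hC m x hx) (abs_nonneg _)
  have hSmeas : ∀ θ, Measurable (S θ) := fun θ =>
    Finset.measurable_sum _ fun m _ => (hφmeas m).const_mul _
  have hint : ∀ (g : (Fin N → ℝ) → ℝ) (c : ℝ), Measurable g →
      (∀ x ∈ X, |g x| ≤ c) → Integrable g ν := by
    intro g c hg hb
    refine (integrable_const c).mono' hg.aestronglyMeasurable ?_
    exact hae.mono fun x hx => by simpa [Real.norm_eq_abs] using hb x hx
  have hexpb : ∀ θ, ∀ x ∈ X, |Real.exp (-S θ x)| ≤ Real.exp (B θ) := by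
    intro θ x hx
    rw [abs_of_pos (Real.exp_pos _)]
    exact Real.exp_le_exp.2 ((neg_le_abs _).trans (hSB θ x hx))
  have hintE : ∀ θ, Integrable (fun x => Real.exp (-S θ x)) ν := fun θ =>
    hint _ (Real.exp (B θ)) (hSmeas θ).neg.exp (hexpb θ)
  have hintφE : ∀ θ m, Integrable (fun x => φ m x * Real.exp (-S θ x)) ν := by
    intro θ m
    refine hint _ (C m * Real.exp (B θ)) ((hφmeas m).mul (hSmeas θ).neg.exp) ?_
    intro x hx
    rw [abs_mul]
    exact mul_le_mul (hC m x hx) (hexpb θ x hx) (abs_nonneg _) (hC0 m)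
  obtain ⟨Z, hZdef⟩ : ∃ Z : (M → ℝ) → ℝ, Z = fun θ => ∫ x, Real.exp (-S θ x) ∂ν := ⟨_, rfl⟩
  have hvolpos : 0 < (volume X).toReal := ENNReal.toReal_pos hXpos.ne' hXfin.ne
  have hZlow : ∀ θ, Real.exp (-B θ) * (volume X).toReal ≤ Z θ := by
    intro θ
    rw [hZdef]
    refine setIntegral_ge_of_const_le_real hXmeas hXfin.ne ?_ (hintE θ)
    intro x hx
    exact Real.exp_le_exp.2 (neg_le_neg ((le_abs_self _).trans (hSB θ x hx)))
  have hZpos : ∀ θ, 0 < Z θ := fun θ =>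
    lt_of_lt_of_le (mul_pos (Real.exp_pos _) hvolpos) (hZlow θ)
  have hZcont : Continuous Z := by
    rw [continuous_iff_continuousAt]
    intro θ₀
    rw [hZdef]
    apply continuousAt_of_dominated (bound := fun _ => Real.exp (B θ₀ + ∑ m, C m))
    · exact Filter.Eventually.of_forall fun θ => ((hSmeas θ).neg.exp).aestronglyMeasurable
    · filter_upwards [Metric.ball_mem_nhds θ₀ one_pos] with θ hθ
      refine hae.mono fun x hx => ?_
      rw [Real.norm_eq_abs]
      refine (hexpb θ x hx).trans (Real.exp_le_exp.2 ?_)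
      rw [hBdef]
      calc ∑ m, |θ m| * C m ≤ ∑ m, (|θ₀ m| + 1) * C m := by
            refine Finset.sum_le_sum fun m _ => mul_le_mul_of_nonneg_right ?_ (hC0 m)
            have h1 : |θ m - θ₀ m| ≤ dist θ θ₀ := by
              rw [← Real.dist_eq]; exact dist_le_pi_dist θ θ₀ m
            have h2 : dist θ θ₀ < 1 := Metric.mem_ball.1 hθ
            calc |θ m| ≤ |θ m - θ₀ m| + |θ₀ m| := by
                  simpa using abs_add_le (θ m - θ₀ m) (θ₀ m)
              _ ≤ |θ₀ m| + 1 := by linarith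
        _ = B θ₀ + ∑ m, C m := by rw [hBdef]; rw [← Finset.sum_add_distrib]; ring_nf
    · exact integrable_const _
    · refine Filter.Eventually.of_forall fun x => ?_
      have : Continuous fun θ : M → ℝ => Real.exp (-S θ x) := by
        exact (Real.continuous_exp.comp
          ((continuous_finset_sum _ fun m _ => (continuous_apply m).mul continuous_const).neg))
      exact this.continuousAt
  obtain ⟨G, hGdef⟩ : ∃ G : (M → ℝ) → ℝ,
      G = fun θ => ∑ m, θ m ^ 2 / (2 * Λ m) + Real.log (Z θ) + ∑ m, μ m * θ m := ⟨_, rfl⟩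
  have hGcont : Continuous G := by
    rw [hGdef]
    refine Continuous.add (Continuous.add ?_ ?_) ?_
    · exact continuous_finset_sum _ fun m _ => ((continuous_apply m).pow 2).div_const _
    · rw [continuous_iff_continuousAt]
      exact fun θ => (Real.continuousAt_log (hZpos θ).ne').comp hZcont.continuousAt
    · exact continuous_finset_sum _ fun m _ => continuous_const.mul (continuous_apply m)
  -- coercivity and existence of global min
  have hmin : ∃ θs : M → ℝ, ∀ θ, G θs ≤ G θ := by
    haveI := hM
    have m₁ : M := Classical.arbitrary M
    set Λmax : ℝ := Finset.univ.sup' Finset.univ_nonempty Λ with hΛmaxdef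
    have hΛle : ∀ m, Λ m ≤ Λmax := fun m => Finset.le_sup' Λ (Finset.mem_univ m)
    have hΛmax : 0 < Λmax := lt_of_lt_of_le (hΛ m₁) (hΛle m₁)
    set K : ℝ := ∑ m, (C m + |μ m|) with hKdef
    have hK0 : 0 ≤ K := Finset.sum_nonneg fun m _ => add_nonneg (hC0 m) (abs_nonneg _)
    set L : ℝ := Real.log ((volume X).toReal) with hLdef
    have hlow : ∀ θ : M → ℝ, ‖θ‖ ^ 2 / (2 * Λmax) - K * ‖θ‖ + L ≤ G θ := by
      intro θ
      obtain ⟨m₀, -, hm₀⟩ := Finset.exists_max_image Finset.univ (fun m => |θ m|)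
        ⟨m₁, Finset.mem_univ m₁⟩
      have hnorm : ‖θ‖ ≤ |θ m₀| := by
        refine (pi_norm_le_iff_of_nonneg (abs_nonneg _)).2 fun m => ?_
        simpa [Real.norm_eq_abs] using hm₀ m (Finset.mem_univ m)
      have h1 : ‖θ‖ ^ 2 / (2 * Λmax) ≤ ∑ m, θ m ^ 2 / (2 * Λ m) := by
        have hsq : ‖θ‖ ^ 2 ≤ θ m₀ ^ 2 := by
          rw [← sq_abs (θ m₀)]
          exact pow_le_pow_left₀ (norm_nonneg θ) hnorm 2
        have h2 : ‖θ‖ ^ 2 / (2 * Λmax) ≤ θ m₀ ^ 2 / (2 * Λ m₀) :=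
          div_le_div₀ (sq_nonneg _) hsq (by linarith [hΛ m₀])
            (by linarith [hΛle m₀])
        refine h2.trans ?_
        exact Finset.single_le_sum (f := fun m => θ m ^ 2 / (2 * Λ m))
          (fun m _ => div_nonneg (sq_nonneg _)
          (mul_nonneg (by norm_num) (hΛ m).le)) (Finset.mem_univ m₀)
      have h2 : Real.log (Z θ) ≥ -B θ + L := by
        have := Real.log_le_log (mul_pos (Real.exp_pos _) hvolpos) (hZlow θ)
        rwa [Real.log_mul (Real.exp_pos _).ne' hvolpos.ne', Real.log_exp] at this
      have h3 : B θ + ∑ m, |μ m| * |θ m| ≤ K * ‖θ‖ := by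
        rw [hBdef, hKdef, Finset.sum_mul, ← Finset.sum_add_distrib]
        refine Finset.sum_le_sum fun m _ => ?_
        have hθm : |θ m| ≤ ‖θ‖ := by
          simpa [Real.norm_eq_abs] using norm_le_pi_norm θ m
        calc |θ m| * C m + |μ m| * |θ m| = (C m + |μ m|) * |θ m| := by ring
          _ ≤ (C m + |μ m|) * ‖θ‖ := by
              exact mul_le_mul_of_nonneg_left hθm (add_nonneg (hC0 m) (abs_nonneg _))
      have h4 : -(∑ m, |μ m| * |θ m|) ≤ ∑ m, μ m * θ m := by
        rw [← Finset.sum_neg_distrib]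
        refine Finset.sum_le_sum fun m _ => ?_
        calc -(|μ m| * |θ m|) = -|μ m * θ m| := by rw [abs_mul]
          _ ≤ μ m * θ m := neg_abs_le _
      rw [hGdef]
      have : -B θ + L - ∑ m, |μ m| * |θ m| ≥ -(K * ‖θ‖) + L := by linarith
      linarith
    clear_value Λmax K L
    set R : ℝ := max 1 (2 * Λmax * (K + |G 0 - L| + 1)) with hRdef
    have hR0 : 0 < R := lt_of_lt_of_le one_pos (le_max_left _ _)
    have hRout : ∀ θ : M → ℝ, R < ‖θ‖ → G 0 < G θ := by
      intro θ hθ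
      refine lt_of_lt_of_le ?_ (hlow θ)
      set s := ‖θ‖ with hs
      clear_value s
      have hs1 : 1 ≤ s := le_of_lt (lt_of_le_of_lt (le_max_left _ _) hθ)
      have hs2 : 2 * Λmax * (K + |G 0 - L| + 1) ≤ s :=
        le_of_lt (lt_of_le_of_lt (le_max_right _ _) hθ)
      have h5 : K + |G 0 - L| + 1 ≤ s / (2 * Λmax) := by
        rw [le_div_iff₀ (by linarith)]
        linarith [hs2]
      have h6 : s * K + s * (|G 0 - L| + 1) ≤ s ^ 2 / (2 * Λmax) := by
        have h := mul_le_mul_of_nonneg_left h5 (by linarith : (0:ℝ) ≤ s)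
        calc s * K + s * (|G 0 - L| + 1) = s * (K + |G 0 - L| + 1) := by ring
          _ ≤ s * (s / (2 * Λmax)) := h
          _ = s ^ 2 / (2 * Λmax) := by ring
      have h7 : G 0 - L ≤ |G 0 - L| := le_abs_self _
      have h8 : |G 0 - L| + 1 ≤ s * (|G 0 - L| + 1) := by
        nlinarith [abs_nonneg (G 0 - L)]
      linarith [h6, h7, h8]
    obtain ⟨θs, hθsm, hθsmin⟩ := (isCompact_closedBall (0 : M → ℝ) R).exists_isMinOn
      ⟨0, Metric.mem_closedBall_self hR0.le⟩ hGcont.continuousOn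
    refine ⟨θs, fun θ => ?_⟩
    by_cases h : ‖θ‖ ≤ R
    · exact isMinOn_iff.1 hθsmin θ (by simpa [Metric.mem_closedBall, dist_zero_right] using h)
    · refine le_trans (isMinOn_iff.1 hθsmin 0 (Metric.mem_closedBall_self hR0.le)) ?_
      exact (hRout θ (not_le.1 h)).le
  obtain ⟨θs, hmin⟩ := hmin
  -- derivative identity at the minimizer
  have hfix : ∀ m, θs m = Λ m * ((∫ x, φ m x * Real.exp (-S θs x) ∂ν) / Z θs - μ m) := by
    intro m
    have hup : ∀ (t : ℝ) (x : Fin N → ℝ),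
        S (Function.update θs m t) x = S θs x + (t - θs m) * φ m x := by
      intro t x
      have h1 : S (Function.update θs m t) x - S θs x = (t - θs m) * φ m x := by
        rw [hSdef]
        simp only
        rw [← Finset.sum_sub_distrib, Finset.sum_eq_single m]
        · rw [Function.update_self]; ring
        · intro j _ hj; rw [Function.update_of_ne hj]; ring
        · intro h; exact absurd (Finset.mem_univ m) h
      linarith [h1]
    -- derivative of Z along coordinate m at θs m
    have hZd : HasDerivAt (fun t => Z (Function.update θs m t))
        (∫ x, Real.exp (-S θs x) * (-φ m x) ∂ν) (θs m) := by
      have key := hasDerivAt_integral_of_dominated_loc_of_deriv_le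
        (F := fun t x => Real.exp (-S (Function.update θs m t) x))
        (F' := fun t x => Real.exp (-S (Function.update θs m t) x) * (-φ m x))
        (x₀ := θs m) (s := Metric.ball (θs m) 1)
        (bound := fun _ => Real.exp (B θs + C m) * C m) (μ := ν)
        (Metric.ball_mem_nhds _ one_pos)
        (Filter.Eventually.of_forall fun t => ((hSmeas _).neg.exp).aestronglyMeasurable)
        (by simp only [Function.update_eq_self]; exact hintE θs)
        (((hSmeas _).neg.exp.mul (hφmeas m).neg).aestronglyMeasurable)
        ?_ (integrable_const _) ?_
      · obtain ⟨-, h⟩ := key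
        simp only [Function.update_eq_self] at h
        simp only [hZdef]
        exact h
      · -- bound on the derivative
        refine hae.mono fun x hx => ?_
        intro t ht
        have habs : |S (Function.update θs m t) x| ≤ B θs + C m := by
          rw [hup t x]
          have h2 : |t - θs m| ≤ 1 := by
            have := Metric.mem_ball.1 ht
            rw [Real.dist_eq] at this
            linarith [this.le]
          calc |S θs x + (t - θs m) * φ m x| ≤ |S θs x| + |(t - θs m) * φ m x| :=
                abs_add_le _ _
            _ ≤ B θs + C m := by
                refine add_le_add (hSB θs x hx) ?_
                rw [abs_mul]
                calc |t - θs m| * |φ m x| ≤ 1 * C m :=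
                      mul_le_mul h2 (hC m x hx) (abs_nonneg _) zero_le_one
                  _ = C m := one_mul _
        rw [Real.norm_eq_abs, abs_mul, abs_neg, abs_of_pos (Real.exp_pos _)]
        refine mul_le_mul ?_ (hC m x hx) (abs_nonneg _) (Real.exp_pos _).le
        exact Real.exp_le_exp.2 ((neg_le_abs _).trans habs)
      · -- pointwise derivative
        refine Filter.Eventually.of_forall fun x => ?_
        intro t _
        have h1 : HasDerivAt (fun t : ℝ => -(S θs x + (t - θs m) * φ m x)) (-φ m x) t := by
          have h0 := (((hasDerivAt_id t).sub_const (θs m)).mul_const (φ m x)).const_add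
            (S θs x)
          have h0' := h0.neg
          simp only [one_mul] at h0'
          exact h0'
        have h2 := h1.exp
        have hfun : (fun t => Real.exp (-S (Function.update θs m t) x)) =
            fun t => Real.exp (-(S θs x + (t - θs m) * φ m x)) :=
          funext fun t => by rw [hup t x]
        rw [hfun]
        beta_reduce
        rw [hup t x]
        exact h2
    -- derivative of log Z along coordinate m
    have hZne : Z (Function.update θs m (θs m)) ≠ 0 := by
      rw [Function.update_eq_self]; exact (hZpos θs).ne'
    have hlogd : HasDerivAt (fun t => Real.log (Z (Function.update θs m t)))
        ((∫ x, Real.exp (-S θs x) * (-φ m x) ∂ν) / Z θs) (θs m) := by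
      have := hZd.log hZne
      simpa only [Function.update_eq_self] using this
    -- sums along coordinate m
    have hq : ∀ t : ℝ, ∑ m', (Function.update θs m t m') ^ 2 / (2 * Λ m') =
        t ^ 2 / (2 * Λ m) - (θs m) ^ 2 / (2 * Λ m) + ∑ m', (θs m') ^ 2 / (2 * Λ m') := by
      intro t
      have h1 : ∑ m', ((Function.update θs m t m') ^ 2 / (2 * Λ m')
          - (θs m') ^ 2 / (2 * Λ m')) = t ^ 2 / (2 * Λ m) - (θs m) ^ 2 / (2 * Λ m) := by
        rw [Finset.sum_eq_single m]
        · rw [Function.update_self]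
        · intro j _ hj; rw [Function.update_of_ne hj]; ring
        · intro h; exact absurd (Finset.mem_univ m) h
      rw [Finset.sum_sub_distrib] at h1
      linarith [h1]
    have hl : ∀ t : ℝ, ∑ m', μ m' * Function.update θs m t m' =
        μ m * t - μ m * θs m + ∑ m', μ m' * θs m' := by
      intro t
      have h1 : ∑ m', (μ m' * Function.update θs m t m' - μ m' * θs m') =
          μ m * t - μ m * θs m := by
        rw [Finset.sum_eq_single m]
        · rw [Function.update_self]
        · intro j _ hj; rw [Function.update_of_ne hj]; ring
        · intro h; exact absurd (Finset.mem_univ m) h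
      rw [Finset.sum_sub_distrib] at h1
      linarith [h1]
    -- derivative of G along coordinate m
    have hfun : (fun t => G (Function.update θs m t)) = fun t =>
        (t ^ 2 / (2 * Λ m) - (θs m) ^ 2 / (2 * Λ m) + ∑ m', (θs m') ^ 2 / (2 * Λ m'))
        + Real.log (Z (Function.update θs m t))
        + (μ m * t - μ m * θs m + ∑ m', μ m' * θs m') := by
      funext t
      rw [hGdef]
      simp only
      rw [hq t, hl t]
    have hGd : HasDerivAt (fun t => G (Function.update θs m t))
        (θs m / Λ m + (∫ x, Real.exp (-S θs x) * (-φ m x) ∂ν) / Z θs + μ m) (θs m) := by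
      rw [hfun]
      have hpoly : HasDerivAt (fun t : ℝ => t ^ 2 / (2 * Λ m) - (θs m) ^ 2 / (2 * Λ m)
          + ∑ m', (θs m') ^ 2 / (2 * Λ m')) (θs m / Λ m) (θs m) := by
        have h0 := (((hasDerivAt_pow 2 (θs m)).div_const (2 * Λ m)).sub_const
          ((θs m) ^ 2 / (2 * Λ m))).add_const (∑ m', (θs m') ^ 2 / (2 * Λ m'))
        refine h0.congr_deriv ?_
        simp only [Nat.cast_ofNat, pow_one]
        field_simp
        norm_num
      have hlin : HasDerivAt (fun t : ℝ => μ m * t - μ m * θs m + ∑ m', μ m' * θs m')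
          (μ m) (θs m) := by
        have h0 := (((hasDerivAt_id (θs m)).const_mul (μ m)).sub_const
          (μ m * θs m)).add_const (∑ m', μ m' * θs m')
        simpa using h0
      exact (hpoly.add hlogd).add hlin
    -- the coordinate function has a local minimum at θs m
    have hloc : IsLocalMin (fun t => G (Function.update θs m t)) (θs m) := by
      have hminon : IsMinOn (fun t => G (Function.update θs m t)) Set.univ (θs m) := by
        refine isMinOn_univ_iff.2 fun t => ?_
        simp only [Function.update_eq_self]
        exact hmin _
      exact hminon.isLocalMin Filter.univ_mem
    have hD0 := hloc.hasDerivAt_eq_zero hGd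
    have hI : (∫ x, Real.exp (-S θs x) * (-φ m x) ∂ν)
        = -∫ x, φ m x * Real.exp (-S θs x) ∂ν := by
      rw [← integral_neg]
      congr 1
      funext x
      ring
    rw [hI, neg_div] at hD0
    have hΛm := (hΛ m).ne'
    have h2 : θs m / Λ m = (∫ x, φ m x * Real.exp (-S θs x) ∂ν) / Z θs - μ m := by
      linarith [hD0]
    calc θs m = Λ m * (θs m / Λ m) := by field_simp
      _ = Λ m * ((∫ x, φ m x * Real.exp (-S θs x) ∂ν) / Z θs - μ m) := by rw [h2]
  refine ⟨θs, fun m => ?_⟩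
  have := hfix m
  rw [this]
  congr 1
  congr 1
  rw [← integral_div]
  simp only [mul_div_assoc]
  simp only [hSdef, hZdef]
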